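/- Let m ≥ 3, r > 0, c_j = 2(j−1)r sin(π/m) for 1 ≤ j ≤ m+1, and let Q be the uniform distribution on [0, 2mr sin(π/m)]. Let k ≥ 1 and n = mk + 1. Then the n-th conditional unconstrained quantization error for Q with respect to the conditional set β = {c_j : 1 ≤ j ≤ m+1} equals r² sin²(π/m)/(3k²), and this infimum is attained by the set γ_n = ⋃_{j=1}^{m} { c_j + 2(i−1)r sin(π/m)/k : 1 ≤ i ≤ k+1 }. -/

import Mathlib

open MeasureTheory Set Filter

/-- The uniform distribution on `[a, b]`: normalized Lebesgue measure restricted to `[a, b]`. -/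
noncomputable def uniformOn (a b : ℝ) : Measure ℝ :=
  (ENNReal.ofReal (b - a))⁻¹ • volume.restrict (Set.Icc a b)

/-- The distortion error of a set `s` of points for the measure `P`. -/
noncomputable def distortion (P : Measure ℝ) (s : Set ℝ) : ℝ :=
  ∫ x, sInf ((fun a => (x - a) ^ 2) '' s) ∂P

/-- The `n`-th conditional (unconstrained) quantization error for `P` with respect to
the conditional set `β`. -/
noncomputable def condQuantError (P : Measure ℝ) (β : Set ℝ) (n : ℕ) : ℝ :=
  sInf { v : ℝ | ∃ α : Set ℝ, α.Finite ∧ α.ncard ≤ n - β.ncard ∧ v = distortion P (α ∪ β) }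

lemma gap_integral (p q : ℝ) (hpq : p ≤ q) :
    ∫ t in Icc p q, min ((t - p) ^ 2) ((t - q) ^ 2) = (q - p) ^ 3 / 12 := by
  have hc1 : p ≤ (p + q) / 2 := by linarith
  have hc2 : (p + q) / 2 ≤ q := by linarith
  have hint : ∀ a : ℝ, Continuous fun t : ℝ => min ((t - p) ^ 2) ((t - q) ^ 2) := by
    intro _; exact (continuous_id.sub continuous_const).pow 2 |>.min
      ((continuous_id.sub continuous_const).pow 2)
  rw [MeasureTheory.integral_Icc_eq_integral_Ioc,
    ← intervalIntegral.integral_of_le hpq,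
    ← intervalIntegral.integral_add_adjacent_intervals (b := (p + q) / 2)
      ((hint 0).intervalIntegrable _ _) ((hint 0).intervalIntegrable _ _)]
  have h1 : ∫ t in p..(p + q) / 2, min ((t - p) ^ 2) ((t - q) ^ 2)
      = ∫ t in p..(p + q) / 2, (t - p) ^ 2 := by
    apply intervalIntegral.integral_congr
    intro t ht
    rw [Set.uIcc_of_le hc1] at ht
    have h1 : 0 ≤ t - p := by linarith [ht.1]
    have h2 : t - p ≤ q - t := by have := ht.2; linarith
    have : (t - p) ^ 2 ≤ (t - q) ^ 2 := by nlinarith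
    exact min_eq_left this
  have h2 : ∫ t in ((p + q) / 2)..q, min ((t - p) ^ 2) ((t - q) ^ 2)
      = ∫ t in ((p + q) / 2)..q, (t - q) ^ 2 := by
    apply intervalIntegral.integral_congr
    intro t ht
    rw [Set.uIcc_of_le hc2] at ht
    have h1 : 0 ≤ q - t := by linarith [ht.2]
    have h2 : q - t ≤ t - p := by have := ht.1; linarith
    have : (t - q) ^ 2 ≤ (t - p) ^ 2 := by nlinarith
    exact min_eq_right this
  rw [h1, h2]
  rw [show (fun t : ℝ => (t - p) ^ 2) = fun t : ℝ => (fun s : ℝ => s ^ 2) (t - p) from rfl,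
    intervalIntegral.integral_comp_sub_right (fun s : ℝ => s ^ 2) p,
    show (fun t : ℝ => (t - q) ^ 2) = fun t : ℝ => (fun s : ℝ => s ^ 2) (t - q) from rfl,
    intervalIntegral.integral_comp_sub_right (fun s : ℝ => s ^ 2) q,
    integral_pow, integral_pow]
  ring

lemma cont_inf' (F : Finset ℝ) (hF : F.Nonempty) :
    Continuous fun t : ℝ => F.inf' hF (fun a => (t - a) ^ 2) := by
  induction hF using Finset.Nonempty.cons_induction with
  | singleton a =>
      have : (fun t : ℝ => ({a} : Finset ℝ).inf' (Finset.singleton_nonempty a)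
          (fun b => (t - b) ^ 2)) = fun t => (t - a) ^ 2 := by
        funext t; simp
      rw [this]
      exact (continuous_id.sub continuous_const).pow 2
  | cons a s ha hs ih =>
      have heq : (fun t : ℝ => (Finset.cons a s ha).inf' (Finset.cons_nonempty ha)
          (fun b => (t - b) ^ 2))
          = fun t => min ((t - a) ^ 2) (s.inf' hs fun b => (t - b) ^ 2) := by
        funext t; rw [Finset.inf'_cons hs]
      rw [heq]
      exact ((continuous_id.sub continuous_const).pow 2).min ih

lemma cell_eq (F : Finset ℝ) (hF : F.Nonempty) (p q : ℝ) (hp : p ∈ F) (hq : q ∈ F)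
    (hsep : ∀ a ∈ F, a ≤ p ∨ q ≤ a) (t : ℝ) (ht : t ∈ Icc p q) :
    F.inf' hF (fun a => (t - a) ^ 2) = min ((t - p) ^ 2) ((t - q) ^ 2) := by
  apply le_antisymm
  · apply le_min (Finset.inf'_le _ hp) (Finset.inf'_le _ hq)
  · apply Finset.le_inf'
    intro a ha
    rcases hsep a ha with h | h
    · exact le_trans (min_le_left _ _) (by nlinarith [ht.1, ht.2])
    · exact le_trans (min_le_right _ _) (by nlinarith [ht.1, ht.2])

lemma main_eq (F : Finset ℝ) (hF : F.Nonempty) (x : ℕ → ℝ) (N : ℕ)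
    (hmono : ∀ i j, i ≤ j → j ≤ N → x i ≤ x j)
    (hmem : ∀ i, i ≤ N → x i ∈ F)
    (hsep : ∀ a ∈ F, ∀ i, i < N → a ≤ x i ∨ x (i + 1) ≤ a) :
    ∫ t in Icc (x 0) (x N), F.inf' hF (fun a => (t - a) ^ 2)
      = ∑ i ∈ Finset.range N, (x (i + 1) - x i) ^ 3 / 12 := by
  induction N with
  | zero =>
      rw [Finset.sum_range_zero, Icc_self]
      rw [MeasureTheory.Measure.restrict_singleton]
      simp
  | succ N ih =>
      have h0N : x 0 ≤ x N := hmono 0 N (Nat.zero_le _) (Nat.le_succ _)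
      have hNN : x N ≤ x (N + 1) := hmono N (N + 1) (Nat.le_succ _) le_rfl
      have hcont := cont_inf' F hF
      have hsplit : ∫ t in Icc (x 0) (x (N + 1)), F.inf' hF (fun a => (t - a) ^ 2)
          = (∫ t in Icc (x 0) (x N), F.inf' hF (fun a => (t - a) ^ 2))
            + ∫ t in Icc (x N) (x (N + 1)), F.inf' hF (fun a => (t - a) ^ 2) := by
        rw [MeasureTheory.integral_Icc_eq_integral_Ioc,
          MeasureTheory.integral_Icc_eq_integral_Ioc,
          MeasureTheory.integral_Icc_eq_integral_Ioc,
          ← intervalIntegral.integral_of_le (h0N.trans hNN),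
          ← intervalIntegral.integral_of_le h0N,
          ← intervalIntegral.integral_of_le hNN,
          intervalIntegral.integral_add_adjacent_intervals
            (hcont.intervalIntegrable _ _) (hcont.intervalIntegrable _ _)]
      rw [hsplit, Finset.sum_range_succ,
        ih (fun i j hij hj => hmono i j hij (hj.trans (Nat.le_succ _)))
          (fun i hi => hmem i (hi.trans (Nat.le_succ _)))
          (fun a ha i hi => hsep a ha i (hi.trans (Nat.lt_succ_self _)))]
      congr 1
      rw [MeasureTheory.setIntegral_congr_fun measurableSet_Icc
        (fun t ht => cell_eq F hF (x N) (x (N + 1)) (hmem N (Nat.le_succ _))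
          (hmem (N + 1) le_rfl)
          (fun a ha => hsep a ha N (Nat.lt_succ_self _)) t ht)]
      exact gap_integral (x N) (x (N + 1)) hNN

lemma equi_integral (δ : ℝ) (hδ : 0 < δ) (M : ℕ)
    (F : Finset ℝ) (hFdef : F = (Finset.range (M + 1)).image (fun i : ℕ => (i : ℝ) * δ))
    (hF : F.Nonempty) :
    ∫ t in Icc (0:ℝ) ((M : ℝ) * δ), F.inf' hF (fun a => (t - a) ^ 2)
      = (M : ℝ) * δ ^ 3 / 12 := by
  have key := main_eq F hF (fun i : ℕ => (i : ℝ) * δ) M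
    (fun i j hij _ => by
      show (i : ℝ) * δ ≤ (j : ℝ) * δ
      have : (i : ℝ) ≤ j := Nat.cast_le.2 hij
      nlinarith)
    (fun i hi => by
      rw [hFdef]
      exact Finset.mem_image.2 ⟨i, Finset.mem_range.2 (Nat.lt_succ_of_le hi), rfl⟩)
    (fun a ha i hi => by
      rw [hFdef] at ha
      obtain ⟨j, hj, rfl⟩ := Finset.mem_image.1 ha
      rcases le_or_gt j i with h | h
      · refine Or.inl ?_
        show (j : ℝ) * δ ≤ (i : ℝ) * δ
        have : (j:ℝ) ≤ i := Nat.cast_le.2 h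
        nlinarith
      · refine Or.inr ?_
        show (((i:ℕ) + 1 : ℕ) : ℝ) * δ ≤ (j : ℝ) * δ
        have : (((i:ℕ)+1 : ℕ) : ℝ) ≤ j := Nat.cast_le.2 h
        nlinarith)
  simp only [Nat.cast_zero, zero_mul] at key
  rw [key]
  have heq : ∀ i ∈ Finset.range M,
      ((((i:ℕ) + 1 : ℕ) : ℝ) * δ - (i : ℝ) * δ) ^ 3 / 12 = δ ^ 3 / 12 := by
    intro i _
    push_cast
    ring
  rw [Finset.sum_congr rfl heq, Finset.sum_const, Finset.card_range, nsmul_eq_mul]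
  ring

lemma lower_bound_integral (L : ℝ) (hL : 0 < L) (F : Finset ℝ) (h0F : (0:ℝ) ∈ F)
    (hLF : L ∈ F) (M : ℕ) (hM : 1 ≤ M) (hcard : F.card ≤ M + 1) (hF : F.Nonempty) :
    L ^ 3 / (12 * (M : ℝ) ^ 2)
      ≤ ∫ t in Icc (0:ℝ) L, F.inf' hF (fun a => (t - a) ^ 2) := by
  classical
  set Gs : Finset ℝ := F.filter (fun a => a ∈ Icc (0:ℝ) L) with hGs
  have hG0 : (0:ℝ) ∈ Gs := Finset.mem_filter.2 ⟨h0F, ⟨le_rfl, hL.le⟩⟩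
  have hGL : L ∈ Gs := Finset.mem_filter.2 ⟨hLF, ⟨hL.le, le_rfl⟩⟩
  set l : List ℝ := Gs.sort (· ≤ ·) with hl
  have hlen : l.length = Gs.card := Finset.length_sort _
  have hsorted : List.Pairwise (· ≤ ·) l := Finset.pairwise_sort _ _
  have hcard2 : 2 ≤ Gs.card := by
    apply Finset.one_lt_card.2 ⟨0, hG0, L, hGL, hL.ne⟩
  obtain ⟨N, hlenN⟩ : ∃ N, l.length = N + 1 := ⟨l.length - 1, by omega⟩
  have hN1 : 1 ≤ N := by omega
  obtain ⟨x, hxdef⟩ : ∃ x : ℕ → ℝ, x = fun i => l.getD i 0 := ⟨_, rfl⟩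
  have hget : ∀ i, ∀ _hi : i ≤ N, x i = l.get ⟨i, by omega⟩ := by
    intro i hi
    rw [hxdef]
    exact List.getD_eq_getElem l 0 (by omega)
  have hmono : ∀ i j, i ≤ j → j ≤ N → x i ≤ x j := by
    intro i j hij hj
    rw [hget i (hij.trans hj), hget j hj]
    exact hsorted.rel_get_of_le (by exact_mod_cast hij)
  have hxmem : ∀ i, i ≤ N → x i ∈ Gs := by
    intro i hi
    rw [hget i hi]
    exact (Finset.mem_sort _).1 (l.get_mem _)
  -- every element of Gs is some x j
  have hsurj : ∀ a ∈ Gs, ∃ j, j ≤ N ∧ x j = a := by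
    intro a ha
    obtain ⟨⟨j, hj⟩, hja⟩ := List.mem_iff_get.1 ((Finset.mem_sort (α := ℝ) (· ≤ ·)).2 ha)
    have hj2 : j < l.length := hj
    exact ⟨j, by omega, by rw [hget j (by omega)]; exact hja⟩
  have hx0 : x 0 = 0 := by
    obtain ⟨j, hj, hj0⟩ := hsurj 0 hG0
    have h1 : x 0 ≤ x j := hmono 0 j (Nat.zero_le _) hj
    have h2 : 0 ≤ x 0 := (Finset.mem_filter.1 (hxmem 0 (Nat.zero_le _))).2.1
    rw [hj0] at h1
    linarith
  have hxN : x N = L := by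
    obtain ⟨j, hj, hjL⟩ := hsurj L hGL
    have h1 : x j ≤ x N := hmono j N hj le_rfl
    have h2 : x N ≤ L := (Finset.mem_filter.1 (hxmem N le_rfl)).2.2
    rw [hjL] at h1
    linarith
  have hsep : ∀ a ∈ F, ∀ i, i < N → a ≤ x i ∨ x (i + 1) ≤ a := by
    intro a ha i hi
    by_cases hmem : a ∈ Icc (0:ℝ) L
    · obtain ⟨j, hj, hja⟩ := hsurj a (Finset.mem_filter.2 ⟨ha, hmem⟩)
      rcases le_or_gt j i with h | h
      · exact Or.inl (hja ▸ hmono j i h hi.le)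
      · exact Or.inr (hja ▸ hmono (i + 1) j h hj)
    · rcases lt_or_ge a 0 with h | h
      · refine Or.inl (le_trans h.le ?_)
        rw [← hx0]; exact hmono 0 i (Nat.zero_le _) hi.le
      · refine Or.inr ?_
        have hLa : L ≤ a := by
          by_contra hcon
          exact hmem ⟨h, (not_le.1 hcon).le⟩
        refine le_trans ?_ hLa
        rw [← hxN]; exact hmono (i + 1) N hi le_rfl
  have key := main_eq F hF x N hmono
    (fun i hi => (Finset.mem_filter.1 (hxmem i hi)).1) hsep
  rw [hx0, hxN] at key
  rw [key]
  -- sum of gaps is L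
  have hsum : ∑ i ∈ Finset.range N, (x (i + 1) - x i) = L := by
    rw [Finset.sum_range_sub x, hx0, hxN, sub_zero]
  have hnn : ∀ i ∈ Finset.range N, 0 ≤ x (i + 1) - x i := by
    intro i hi
    have := hmono i (i + 1) (Nat.le_succ _) (Finset.mem_range.1 hi)
    linarith
  have hpow := pow_sum_div_card_le_sum_pow (f := fun i => x (i + 1) - x i) hnn 2
  rw [hsum, Finset.card_range] at hpow
  have hNM : N ≤ M := by
    have : Gs.card ≤ F.card := Finset.card_filter_le _ _
    omega
  have h12 : ∑ i ∈ Finset.range N, (x (i + 1) - x i) ^ 3 / 12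
      = (∑ i ∈ Finset.range N, (x (i + 1) - x i) ^ 3) / 12 := by
    rw [Finset.sum_div]
  rw [h12]
  have hN0 : (0:ℝ) < (N:ℝ) := by exact_mod_cast Nat.lt_of_lt_of_le Nat.zero_lt_one hN1
  have hMN : (N:ℝ) ≤ (M:ℝ) := Nat.cast_le.2 hNM
  have hstep : L ^ 3 / (12 * (M:ℝ) ^ 2) ≤ L ^ 3 / (12 * (N:ℝ) ^ 2) :=
    div_le_div_of_nonneg_left (by positivity) (by positivity) (by nlinarith)
  have hstep2 : L ^ 3 / (12 * (N:ℝ) ^ 2) = (L ^ 3 / (N:ℝ) ^ 2) / 12 := by ring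
  have hpow' : L ^ 3 / (N:ℝ) ^ 2 ≤ ∑ i ∈ Finset.range N, (x (i + 1) - x i) ^ 3 := by
    exact_mod_cast hpow
  linarith
lemma distortion_eq (L : ℝ) (hL : 0 < L) (S : Set ℝ) (F : Finset ℝ) (hSF : S = ↑F)
    (hF : F.Nonempty) :
    distortion (uniformOn 0 L) S
      = (1 / L) * ∫ t in Icc (0:ℝ) L, F.inf' hF (fun a => (t - a) ^ 2) := by
  rw [distortion, uniformOn, integral_smul_measure]
  have hfun : ∀ x : ℝ, sInf ((fun a => (x - a) ^ 2) '' S)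
      = F.inf' hF (fun a => (x - a) ^ 2) := by
    intro x
    rw [hSF, Finset.inf'_eq_csInf_image]
  simp_rw [hfun]
  rw [sub_zero, ENNReal.toReal_inv, ENNReal.toReal_ofReal hL.le, smul_eq_mul, one_div]
/-- Proposition 4.4 (case `q = 0`): for `n = mk + 1`, the `n`-th conditional quantization
error of the uniform distribution on `[0, 2mr sin(π/m)]` with respect to
`{c_j : 1 ≤ j ≤ m+1}`, `c_j = 2(j-1)r sin(π/m)`, equals `r² sin²(π/m)/(3k²)`, attained by
`⋃_{j=1}^m {c_j + 2(i-1)r sin(π/m)/k : 1 ≤ i ≤ k+1}`. -/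
theorem stmt13 (m : ℕ) (hm : 3 ≤ m) (r : ℝ) (hr : 0 < r) (k : ℕ) (hk : 1 ≤ k)
    (n : ℕ) (hn : n = m * k + 1)
    (c : ℕ → ℝ) (hc : ∀ j : ℕ, c j = 2 * ((j : ℝ) - 1) * r * Real.sin (Real.pi / m)) :
    condQuantError (uniformOn 0 (2 * m * r * Real.sin (Real.pi / m)))
        (c '' Set.Icc 1 (m + 1)) n
      = r ^ 2 * Real.sin (Real.pi / m) ^ 2 / (3 * (k : ℝ) ^ 2)
    ∧ distortion (uniformOn 0 (2 * m * r * Real.sin (Real.pi / m)))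
        (⋃ j ∈ Set.Icc 1 m,
          (fun i : ℕ => c j + 2 * ((i : ℝ) - 1) * r * Real.sin (Real.pi / m) / (k : ℝ)) ''
            Set.Icc 1 (k + 1))
      = r ^ 2 * Real.sin (Real.pi / m) ^ 2 / (3 * (k : ℝ) ^ 2) := by
  have hm0 : 0 < m := by omega
  have hk0 : 0 < k := hk
  have hmR : (3:ℝ) ≤ (m:ℝ) := by exact_mod_cast hm
  have hmR0 : (0:ℝ) < (m:ℝ) := by linarith
  have hkR : (1:ℝ) ≤ (k:ℝ) := by exact_mod_cast hk
  have hkR0 : (0:ℝ) < (k:ℝ) := by linarith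
  set s : ℝ := Real.sin (Real.pi / m) with hsdef
  have hs : 0 < s := by
    apply Real.sin_pos_of_pos_of_lt_pi
    · positivity
    · rw [div_lt_iff₀ hmR0]
      nlinarith [Real.pi_pos]
  set L : ℝ := 2 * m * r * s with hLdef
  have hL : 0 < L := by positivity
  set δ : ℝ := 2 * r * s / k with hδdef
  have hδ : 0 < δ := by positivity
  set e : ℕ → ℝ := fun i => (i : ℝ) * δ with hedef
  have hein : Function.Injective e := by
    intro a b hab
    have hab' : (a : ℝ) * δ = (b : ℝ) * δ := hab
    have h := mul_right_cancel₀ hδ.ne' hab'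
    exact_mod_cast h
  have hLδ : L = ((m * k : ℕ) : ℝ) * δ := by
    rw [hLdef, hδdef]
    push_cast
    field_simp
  set β : Set ℝ := c '' Set.Icc 1 (m + 1) with hβdef
  set γ : Set ℝ := e '' Set.Icc 0 (m * k) with hγdef
  set Gt : Finset ℝ := (Finset.range (m * k + 1)).image e with hGtdef
  have hγGt : γ = ↑Gt := by
    have hIcc : Set.Icc 0 (m * k) = Set.Iio (m * k + 1) := by
      ext t
      simp [Nat.lt_succ_iff]
    rw [hγdef, hGtdef, Finset.coe_image, Finset.coe_range, hIcc]
  have hGtne : Gt.Nonempty := ⟨e 0, Finset.mem_image.2 ⟨0, Finset.mem_range.2 (by omega), rfl⟩⟩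
  have hce : ∀ j, 1 ≤ j → c j = e ((j - 1) * k) := by
    intro j hj
    rw [hc j, hedef]
    show 2 * ((j : ℝ) - 1) * r * s = (((j - 1) * k : ℕ) : ℝ) * δ
    rw [Nat.cast_mul, Nat.cast_sub hj, Nat.cast_one, hδdef]
    field_simp
  have hc1 : c 1 = 0 := by rw [hc]; norm_num
  have hcm1 : c (m + 1) = L := by rw [hc, hLdef]; push_cast; ring
  have hβ0 : (0 : ℝ) ∈ β := ⟨1, Set.mem_Icc.2 ⟨le_rfl, by omega⟩, hc1⟩
  have hβL : L ∈ β := ⟨m + 1, Set.mem_Icc.2 ⟨by omega, le_rfl⟩, hcm1⟩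
  have hβsub : β ⊆ γ := by
    rintro y ⟨j, hj, rfl⟩
    rw [Set.mem_Icc] at hj
    rw [hce j hj.1]
    exact ⟨(j - 1) * k, Set.mem_Icc.2 ⟨Nat.zero_le _,
      Nat.mul_le_mul_right k (by omega)⟩, rfl⟩
  have hβfin : β.Finite := (Set.finite_Icc _ _).image _
  have hγfin : γ.Finite := (Set.finite_Icc _ _).image _
  have hβncard : β.ncard = m + 1 := by
    rw [hβdef, Set.ncard_image_of_injOn, ← Finset.coe_Icc, Set.ncard_coe_finset, Nat.card_Icc]
    · omega
    · intro j1 h1 j2 h2 he12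
      rw [hc j1, hc j2] at he12
      have h0 : ((j1 : ℝ) - (j2 : ℝ)) * (2 * r * s) = 0 := by linear_combination he12
      rcases mul_eq_zero.1 h0 with h | h
      · have : (j1 : ℝ) = j2 := by linarith
        exact_mod_cast this
      · nlinarith
  have hγncard : γ.ncard = m * k + 1 := by
    rw [hγdef, Set.ncard_image_of_injective _ hein, ← Finset.coe_Icc, Set.ncard_coe_finset,
      Nat.card_Icc]
    omega
  -- distortion of γ
  have hdistγ : distortion (uniformOn 0 L) γ = r ^ 2 * s ^ 2 / (3 * (k : ℝ) ^ 2) := by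
    rw [distortion_eq L hL γ Gt hγGt hGtne, hLδ,
      equi_integral δ hδ (m * k) Gt hGtdef hGtne]
    rw [hδdef]
    push_cast
    field_simp
    ring
  set V : ℝ := r ^ 2 * s ^ 2 / (3 * (k : ℝ) ^ 2) with hVdef
  -- the union expression equals γ
  have hunion : (⋃ j ∈ Set.Icc 1 m,
      (fun i : ℕ => c j + 2 * ((i : ℝ) - 1) * r * s / (k : ℝ)) '' Set.Icc 1 (k + 1)) = γ := by
    ext y
    simp only [Set.mem_iUnion, Set.mem_image, Set.mem_Icc, hγdef]
    constructor
    · rintro ⟨j, ⟨hj1, hj2⟩, i, ⟨hi1, hi2⟩, rfl⟩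
      refine ⟨(j - 1) * k + (i - 1), ⟨Nat.zero_le _, ?_⟩, ?_⟩
      · have h1 : (j - 1) * k ≤ (m - 1) * k := Nat.mul_le_mul_right k (by omega)
        have h2 : (m - 1) * k + k = m * k := by
          have : m - 1 + 1 = m := by omega
          calc (m - 1) * k + k = (m - 1 + 1) * k := by ring
            _ = m * k := by rw [this]
        omega
      · show (((j - 1) * k + (i - 1) : ℕ) : ℝ) * δ
            = c j + 2 * ((i : ℝ) - 1) * r * s / (k : ℝ)
        rw [hc j, Nat.cast_add, Nat.cast_mul, Nat.cast_sub hj1, Nat.cast_sub hi1, Nat.cast_one,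
          hδdef]
        field_simp
    · rintro ⟨t, ⟨-, ht⟩, rfl⟩
      by_cases hlt : t < m * k
      · have hdiv : t / k < m := Nat.div_lt_of_lt_mul (by rw [Nat.mul_comm k m]; exact hlt)
        refine ⟨t / k + 1, ⟨Nat.le_add_left 1 _, hdiv⟩, t % k + 1, ⟨Nat.le_add_left 1 _,
          by have := Nat.mod_lt t hk0; omega⟩, ?_⟩
        show c (t / k + 1)
            + 2 * (((t % k + 1 : ℕ) : ℝ) - 1) * r * s / (k : ℝ) = (t : ℝ) * δ
        have hdm : (k : ℝ) * ((t / k : ℕ) : ℝ) + ((t % k : ℕ) : ℝ) = t := by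
          exact_mod_cast Nat.div_add_mod t k
        rw [hc, hδdef]
        push_cast
        rw [← hdm]
        field_simp
        ring
      · have htmk : t = m * k := by omega
        refine ⟨m, ⟨by omega, le_rfl⟩, k + 1, ⟨by omega, le_rfl⟩, ?_⟩
        rw [htmk]
        show c m + 2 * (((k + 1 : ℕ) : ℝ) - 1) * r * s / (k : ℝ)
            = ((m * k : ℕ) : ℝ) * δ
        rw [hc, hδdef]
        push_cast
        field_simp
        ring
  -- membership: V is attained
  have hVmem : V ∈ { v : ℝ | ∃ α : Set ℝ, α.Finite ∧ α.ncard ≤ n - β.ncard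
      ∧ v = distortion (uniformOn 0 L) (α ∪ β) } := by
    refine ⟨γ \ β, hγfin.diff, ?_, ?_⟩
    · rw [Set.ncard_diff hβsub hβfin, hγncard, hβncard, hn]
    · rw [Set.diff_union_of_subset hβsub, hdistγ]
  -- lower bound
  have hLB : ∀ v ∈ { v : ℝ | ∃ α : Set ℝ, α.Finite ∧ α.ncard ≤ n - β.ncard
      ∧ v = distortion (uniformOn 0 L) (α ∪ β) }, V ≤ v := by
    rintro v ⟨α, hαfin, hαcard, rfl⟩
    have hUfin : (α ∪ β).Finite := hαfin.union hβfin
    set F : Finset ℝ := hUfin.toFinset with hFdef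
    have hcoe : (α ∪ β : Set ℝ) = ↑F := (Set.Finite.coe_toFinset _).symm
    have hFne : F.Nonempty := ⟨0, (Set.Finite.mem_toFinset _).2 (Or.inr hβ0)⟩
    have h0F : (0 : ℝ) ∈ F := (Set.Finite.mem_toFinset _).2 (Or.inr hβ0)
    have hLF : L ∈ F := (Set.Finite.mem_toFinset _).2 (Or.inr hβL)
    have hFcard : F.card ≤ m * k + 1 := by
      have h1 : F.card = (α ∪ β).ncard := by
        rw [Set.ncard_eq_toFinset_card _ hUfin]
      have h2 : (α ∪ β).ncard ≤ α.ncard + β.ncard := Set.ncard_union_le _ _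
      rw [hβncard, hn] at hαcard
      have hmk : m ≤ m * k := Nat.le_mul_of_pos_right m hk0
      rw [h1]
      omega
    have hM1 : 1 ≤ m * k := by
      have := Nat.mul_pos hm0 hk0
      omega
    have hlow := lower_bound_integral L hL F h0F hLF (m * k) hM1 hFcard hFne
    rw [distortion_eq L hL (α ∪ β) F hcoe hFne]
    have h1L : 0 < 1 / L := by positivity
    have hval : (1 / L) * (L ^ 3 / (12 * ((m * k : ℕ) : ℝ) ^ 2)) = V := by
      rw [hVdef, hLdef]
      push_cast
      field_simp
      ring
    calc V = (1 / L) * (L ^ 3 / (12 * ((m * k : ℕ) : ℝ) ^ 2)) := hval.symm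
      _ ≤ (1 / L) * ∫ t in Set.Icc (0:ℝ) L, F.inf' hFne (fun a => (t - a) ^ 2) := by
          apply mul_le_mul_of_nonneg_left hlow h1L.le
  constructor
  · rw [condQuantError]
    exact le_antisymm (csInf_le ⟨V, hLB⟩ hVmem) (le_csInf ⟨V, hVmem⟩ hLB)
  · rw [hunion, hdistγ]
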